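/- If G is any finite simple graph and H is a contractible finite simple graph, then the join G * H is contractible. -/

import Mathlib

universe u

/-- The unit sphere of a vertex: the subgraph induced on the neighbors of `v`. -/
def SimpleGraph.unitSphere {V : Type u} (G : SimpleGraph V) (v : V) :
    SimpleGraph {u : V // G.Adj v u} :=
  SimpleGraph.induce {u : V | G.Adj v u} G

/-- The graph obtained by deleting the vertex `v`. -/
def SimpleGraph.deleteVert {V : Type u} (G : SimpleGraph V) (v : V) :
    SimpleGraph {u : V // u ≠ v} :=
  SimpleGraph.induce {u : V | u ≠ v} G

/-- Inductive notion of contractibility for graphs: the one-vertex graph is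
contractible, and `G` is contractible if for some vertex `v` both the unit sphere
`S(v)` and the deletion `G ∖ v` are contractible. -/
inductive GraphContractible : ∀ {V : Type u}, SimpleGraph V → Prop
  | single {V : Type u} (G : SimpleGraph V) (h1 : Nonempty V) (h2 : Subsingleton V) :
      GraphContractible G
  | step {V : Type u} (G : SimpleGraph V) (v : V)
      (hS : GraphContractible (G.unitSphere v))
      (hD : GraphContractible (G.deleteVert v)) : GraphContractible G

/-- Inductive notion of a `q`-sphere: the empty graph is the `(-1)`-sphere, and for
`q ≥ 0` a graph is a `q`-sphere if every unit sphere is a `(q-1)`-sphere and deleting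
some vertex leaves a contractible graph. -/
inductive GraphSphere : ℤ → ∀ {V : Type u}, SimpleGraph V → Prop
  | empty {V : Type u} (G : SimpleGraph V) (h : IsEmpty V) : GraphSphere (-1) G
  | succ {V : Type u} (G : SimpleGraph V) (q : ℤ) (hq : 0 ≤ q)
      (hS : ∀ v : V, GraphSphere (q - 1) (G.unitSphere v))
      (hv : ∃ v : V, GraphContractible (G.deleteVert v)) : GraphSphere q G

/-- A graph is a `q`-manifold if every unit sphere is a `(q-1)`-sphere. -/
def IsGraphManifold (q : ℤ) {V : Type u} (G : SimpleGraph V) : Prop :=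
  ∀ v : V, GraphSphere (q - 1) (G.unitSphere v)

/-- The join of two graphs: keep all edges and connect every vertex of `G` to every
vertex of `H`. -/
def graphJoin {V W : Type u} (G : SimpleGraph V) (H : SimpleGraph W) :
    SimpleGraph (V ⊕ W) where
  Adj x y := match x, y with
    | Sum.inl a, Sum.inl b => G.Adj a b
    | Sum.inr a, Sum.inr b => H.Adj a b
    | Sum.inl _, Sum.inr _ => True
    | Sum.inr _, Sum.inl _ => True
  symm := ⟨by rintro (a | a) (b | b) h <;> simp_all [SimpleGraph.adj_comm]⟩
  loopless := ⟨by rintro (a | a) h <;> exact SimpleGraph.irrefl _ h⟩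

open Classical in
/-- `f_k(G)`: the number of cliques of `G` with exactly `k+1` vertices. -/
noncomputable def graphFVec {V : Type u} [Fintype V] (G : SimpleGraph V) (k : ℕ) : ℕ :=
  (Finset.univ.filter fun x : Finset V => x.card = k + 1 ∧ G.IsClique (↑x : Set V)).card

/-- The Euler characteristic `χ(G) = Σ_k (-1)^k f_k(G)`. -/
noncomputable def graphEulerChar {V : Type u} [Fintype V] (G : SimpleGraph V) : ℤ :=
  ∑ k ∈ Finset.range (Fintype.card V + 1), (-1 : ℤ) ^ k * graphFVec G k

open Classical in
/-- The curvature of a vertex: `K(v) = Σ_{x ∋ v} (-1)^(|x|-1)/|x|`, summing over the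
cliques of `G` containing `v`. -/
noncomputable def graphCurvature {V : Type u} [Fintype V] (G : SimpleGraph V) (v : V) : ℚ :=
  ∑ x ∈ Finset.univ.filter
      (fun x : Finset V => x.Nonempty ∧ G.IsClique (↑x : Set V) ∧ v ∈ x),
    (-1 : ℚ) ^ (x.card - 1) / (x.card : ℚ)

/-- Contractibility is invariant under graph isomorphism. -/
lemma GraphContractible.of_iso : ∀ {V : Type u} {G : SimpleGraph V},
    GraphContractible G → ∀ {W : Type u} {H : SimpleGraph W}, (G ≃g H) → GraphContractible H := by
  intro V G h
  induction h with
  | single G h1 h2 =>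
    intro W H e
    exact .single H (h1.map e.toEquiv) (e.toEquiv.symm.subsingleton)
  | step G v hS hD ihS ihD =>
    intro W H e
    refine .step H (e v) (ihS ?_) (ihD ?_)
    · exact
        { toEquiv := Equiv.subtypeEquiv e.toEquiv (fun a => by simp [e.map_adj_iff])
          map_rel_iff' := by
            rintro ⟨a, ha⟩ ⟨b, hb⟩
            simpa [SimpleGraph.unitSphere, Equiv.subtypeEquiv] using e.map_adj_iff }
    · exact
        { toEquiv := Equiv.subtypeEquiv e.toEquiv (fun a => by
            simp [not_iff_not, e.toEquiv.apply_eq_iff_eq_symm_apply, Equiv.eq_symm_apply])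
          map_rel_iff' := by
            rintro ⟨a, ha⟩ ⟨b, hb⟩
            simpa [SimpleGraph.deleteVert, Equiv.subtypeEquiv] using e.map_adj_iff }

/-- vertex equiv for the unit sphere of a left vertex of a join -/
def joinSphereEquiv {V W : Type u} (G : SimpleGraph V) (H : SimpleGraph W) (u : V) :
    ({b : V // G.Adj u b} ⊕ W) ≃ {x : V ⊕ W // (graphJoin G H).Adj (Sum.inl u) x} where
  toFun := fun x => match x with
    | Sum.inl ⟨b, hb⟩ => ⟨Sum.inl b, hb⟩
    | Sum.inr w => ⟨Sum.inr w, trivial⟩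
  invFun := fun x => match x with
    | ⟨Sum.inl b, hb⟩ => Sum.inl ⟨b, hb⟩
    | ⟨Sum.inr w, _⟩ => Sum.inr w
  left_inv := by rintro (⟨b, hb⟩ | w) <;> rfl
  right_inv := by rintro ⟨(b | w), hb⟩ <;> rfl

def joinSphereIso {V W : Type u} (G : SimpleGraph V) (H : SimpleGraph W) (u : V) :
    graphJoin (G.unitSphere u) H ≃g (graphJoin G H).unitSphere (Sum.inl u) where
  toEquiv := joinSphereEquiv G H u
  map_rel_iff' := by
    rintro (⟨a, ha⟩ | a) (⟨b, hb⟩ | b) <;>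
      simp [joinSphereEquiv, graphJoin, SimpleGraph.unitSphere] <;> trivial

/-- vertex equiv for deletion of a left vertex of a join -/
def joinDeleteEquiv {V W : Type u} (_G : SimpleGraph V) (_H : SimpleGraph W) (u : V) :
    ({b : V // b ≠ u} ⊕ W) ≃ {x : V ⊕ W // x ≠ Sum.inl u} where
  toFun := fun x => match x with
    | Sum.inl ⟨b, hb⟩ => ⟨Sum.inl b, by simpa using hb⟩
    | Sum.inr w => ⟨Sum.inr w, by simp⟩
  invFun := fun x => match x with
    | ⟨Sum.inl b, hb⟩ => Sum.inl ⟨b, by simpa using hb⟩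
    | ⟨Sum.inr w, _⟩ => Sum.inr w
  left_inv := by rintro (⟨b, hb⟩ | w) <;> rfl
  right_inv := by rintro ⟨(b | w), hb⟩ <;> rfl

def joinDeleteIso {V W : Type u} (G : SimpleGraph V) (H : SimpleGraph W) (u : V) :
    graphJoin (G.deleteVert u) H ≃g (graphJoin G H).deleteVert (Sum.inl u) where
  toEquiv := joinDeleteEquiv G H u
  map_rel_iff' := by
    rintro (⟨a, ha⟩ | a) (⟨b, hb⟩ | b) <;>
      simp [joinDeleteEquiv, graphJoin, SimpleGraph.deleteVert]

lemma graphJoin_contractible_aux :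
    ∀ (n : ℕ) (V W : Type) [Fintype V] (G : SimpleGraph V) (H : SimpleGraph W),
      Fintype.card V = n → GraphContractible H → GraphContractible (graphJoin G H) := by
  intro n
  induction n using Nat.strong_induction_on with
  | _ n ih =>
    intro V W _ G H hcard hH
    classical
    by_cases hV : Nonempty V
    · obtain ⟨u⟩ := hV
      refine .step (graphJoin G H) (Sum.inl u) ?_ ?_
      · refine GraphContractible.of_iso ?_ (joinSphereIso G H u)
        exact ih (Fintype.card {b : V // G.Adj u b})
          (hcard ▸ Fintype.card_subtype_lt (x := u) (G.irrefl))
          _ _ _ _ rfl hH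
      · refine GraphContractible.of_iso ?_ (joinDeleteIso G H u)
        exact ih (Fintype.card {b : V // b ≠ u})
          (hcard ▸ Fintype.card_subtype_lt (x := u) (fun h => h rfl))
          _ _ _ _ rfl hH
    · have : IsEmpty V := not_nonempty_iff.mp hV
      refine GraphContractible.of_iso hH ?_
      exact
        { toEquiv := (Equiv.emptySum V W).symm
          map_rel_iff' := by intro a b; simp [graphJoin, Equiv.emptySum] }

/-- The join of an arbitrary finite graph with a contractible finite graph is
contractible. -/
theorem graphJoin_contractible {V W : Type} [Fintype V] [Fintype W]
    (G : SimpleGraph V) (H : SimpleGraph W) (hH : GraphContractible H) :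
    GraphContractible (graphJoin G H) :=
  graphJoin_contractible_aux (Fintype.card V) V W G H rfl hH
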